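/- Let A be a (possibly infinite) generalized Cartan matrix. Then: (1) the centre of 𝔤'(A) equals 𝔠'(A) = {h ∈ 𝔥'(A) : α_i(h) = 0 for all i ∈ I}; (2) if A is indecomposable, then every proper Q-graded ideal of 𝔤'(A) is contained in the centre 𝔠'(A). -/

import Mathlib

open scoped Pointwise Classical

namespace KM

/-- a (possibly infinite) generalized Cartan matrix -/
structure IsGCM {I : Type*} (A : I → I → ℤ) : Prop where
  diag : ∀ i, A i i = 2
  offDiag : ∀ i j, i ≠ j → A i j ≤ 0
  zero_iff : ∀ i j, A i j = 0 ↔ A j i = 0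

/-- an indecomposable matrix: the index set admits no splitting into two nonempty parts
with all entries between them equal to zero -/
def IsIndecomposable {I : Type*} (A : I → I → ℤ) : Prop :=
  ∀ s : Set I, s.Nonempty → sᶜ.Nonempty → ∃ i ∈ s, ∃ j ∈ sᶜ, A i j ≠ 0

variable (I : Type*) (A : I → I → ℤ)
variable (L : Type*) [LieRing L] [LieAlgebra ℂ L]

/-- Axiomatization of the derived Kac-Moody algebra 𝔤'(A) of a (possibly infinite)
generalized Cartan matrix A: it is generated by Chevalley generators e_i, f_i, α_i^∨
subject to the defining relations, it is graded by the free abelian group Q on the α_i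
(realized as I →₀ ℤ), its zero graded piece is 𝔥'(A) = span of the coroots, and every
Q-graded ideal intersecting 𝔥'(A) trivially is zero (which characterizes the quotient of
𝔤̃'(A) by its unique maximal Q-graded ideal intersecting 𝔥'(A) trivially). -/
structure DerivedKMData where
  e : I → L
  f : I → L
  coroot : I → L
  grading : (I →₀ ℤ) → Submodule ℂ L
  rel_hh : ∀ i j, ⁅coroot i, coroot j⁆ = 0
  rel_ef_eq : ∀ i, ⁅e i, f i⁆ = coroot i
  rel_ef_ne : ∀ i j, i ≠ j → ⁅e i, f j⁆ = 0
  rel_he : ∀ i j, ⁅coroot i, e j⁆ = (A i j : ℂ) • e j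
  rel_hf : ∀ i j, ⁅coroot i, f j⁆ = -(A i j : ℂ) • f j
  generates : LieSubalgebra.lieSpan ℂ L
    (Set.range e ∪ Set.range f ∪ Set.range coroot) = ⊤
  e_mem : ∀ i, e i ∈ grading (Finsupp.single i 1)
  f_mem : ∀ i, f i ∈ grading (-Finsupp.single i 1)
  grading_zero : grading 0 = Submodule.span ℂ (Set.range coroot)
  grading_bracket : ∀ q q' : I →₀ ℤ, ∀ x ∈ grading q, ∀ y ∈ grading q',
    ⁅x, y⁆ ∈ grading (q + q')
  grading_internal : DirectSum.IsInternal grading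
  graded_simple : ∀ J : LieIdeal ℂ L,
    (J.toSubmodule = ⨆ q : I →₀ ℤ, J.toSubmodule ⊓ grading q) →
    J.toSubmodule ⊓ grading 0 = ⊥ → J = ⊥

variable {I A L}

/-- a Q-graded ideal -/
def DerivedKMData.IsGradedIdeal (D : DerivedKMData I A L) (J : LieIdeal ℂ L) : Prop :=
  J.toSubmodule = ⨆ q : I →₀ ℤ, J.toSubmodule ⊓ D.grading q

namespace DerivedKMData

variable {I : Type*} {A : I → I → ℤ} {L : Type*} [LieRing L] [LieAlgebra ℂ L]
variable (D : DerivedKMData I A L)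

/-- the set of canonical generators -/
def genSet : Set L := Set.range D.e ∪ Set.range D.f ∪ Set.range D.coroot

lemma e_mem_gen (i : I) : D.e i ∈ D.genSet := Or.inl (Or.inl ⟨i, rfl⟩)
lemma f_mem_gen (i : I) : D.f i ∈ D.genSet := Or.inl (Or.inr ⟨i, rfl⟩)
lemma coroot_mem_gen (i : I) : D.coroot i ∈ D.genSet := Or.inr ⟨i, rfl⟩

lemma coroot_mem0 (i : I) : D.coroot i ∈ D.grading 0 := by
  rw [D.grading_zero]; exact Submodule.subset_span ⟨i, rfl⟩

/-- anything bracket-stable under the generators is stable under all of `L` -/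
lemma lie_glob (V : Submodule ℂ L) (h : ∀ g ∈ D.genSet, ∀ v ∈ V, ⁅g, v⁆ ∈ V) :
    ∀ x : L, ∀ v ∈ V, ⁅x, v⁆ ∈ V := by
  let T : LieSubalgebra ℂ L :=
    { carrier := {x : L | ∀ v ∈ V, ⁅x, v⁆ ∈ V}
      add_mem' := by
        intro a b ha hb v hv
        rw [add_lie]; exact V.add_mem (ha v hv) (hb v hv)
      zero_mem' := by intro v hv; rw [zero_lie]; exact V.zero_mem
      smul_mem' := by intro c a ha v hv; rw [smul_lie]; exact V.smul_mem c (ha v hv)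
      lie_mem' := by
        intro a b ha hb v hv
        rw [lie_lie]; exact V.sub_mem (ha _ (hb v hv)) (hb _ (ha v hv)) }
  have hT : LieSubalgebra.lieSpan ℂ L D.genSet ≤ T := LieSubalgebra.lieSpan_le.2 h
  have h2 : (⊤ : LieSubalgebra ℂ L) ≤ T := by rw [← D.generates]; exact hT
  intro x v hv
  exact h2 (LieSubalgebra.mem_top x) v hv

/-- anything commuting with the generators is central -/
lemma forall_lie_eq_zero (z : L) (h : ∀ g ∈ D.genSet, ⁅g, z⁆ = 0) : ∀ x : L, ⁅x, z⁆ = 0 := by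
  let T : LieSubalgebra ℂ L :=
    { carrier := {x : L | ⁅x, z⁆ = 0}
      add_mem' := by intro a b ha hb; rw [Set.mem_setOf_eq] at *; rw [add_lie, ha, hb, add_zero]
      zero_mem' := by rw [Set.mem_setOf_eq, zero_lie]
      smul_mem' := by intro c a ha; rw [Set.mem_setOf_eq] at *; rw [smul_lie, ha, smul_zero]
      lie_mem' := by
        intro a b ha hb
        rw [Set.mem_setOf_eq] at *
        rw [lie_lie, ha, hb, lie_zero, lie_zero, sub_zero] }
  have hT : LieSubalgebra.lieSpan ℂ L D.genSet ≤ T := LieSubalgebra.lieSpan_le.2 h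
  have h2 : (⊤ : LieSubalgebra ℂ L) ≤ T := by rw [← D.generates]; exact hT
  intro x
  exact h2 (LieSubalgebra.mem_top x)

lemma exists_scalar {z : L} (hz : z ∈ D.grading 0) (j : I) :
    ∃ c : ℂ, ⁅z, D.e j⁆ = c • D.e j ∧ ⁅z, D.f j⁆ = -(c • D.f j) := by
  rw [D.grading_zero] at hz
  induction hz using Submodule.span_induction with
  | mem x hx =>
    obtain ⟨i, rfl⟩ := hx
    exact ⟨A i j, D.rel_he i j, by rw [D.rel_hf i j, neg_smul]⟩
  | zero => exact ⟨0, by simp⟩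
  | add x y hx hy ihx ihy =>
    obtain ⟨c, hc1, hc2⟩ := ihx
    obtain ⟨d, hd1, hd2⟩ := ihy
    refine ⟨c + d, ?_, ?_⟩
    · rw [add_lie, hc1, hd1, add_smul]
    · rw [add_lie, hc2, hd2, add_smul, neg_add]
  | smul a x hx ihx =>
    obtain ⟨c, h1, h2⟩ := ihx
    exact ⟨a * c, by rw [smul_lie, h1, smul_smul],
      by rw [smul_lie, h2, smul_neg, smul_smul]⟩

lemma lie_eq_zero_of_mem0 {z w : L} (hz : z ∈ D.grading 0) (hw : w ∈ D.grading 0) :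
    ⁅z, w⁆ = 0 := by
  rw [D.grading_zero] at hz hw
  have key : ∀ i, ⁅D.coroot i, w⁆ = 0 := by
    intro i
    induction hw using Submodule.span_induction with
    | mem x hx => obtain ⟨k, rfl⟩ := hx; exact D.rel_hh i k
    | zero => exact lie_zero _
    | add x y hx hy ihx ihy => rw [lie_add, ihx, ihy, add_zero]
    | smul a x hx ih => rw [lie_smul, ih, smul_zero]
  induction hz using Submodule.span_induction with
  | mem x hx => obtain ⟨k, rfl⟩ := hx; exact key k
  | zero => exact zero_lie _
  | add x y hx hy ihx ihy => rw [add_lie, ihx, ihy, add_zero]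
  | smul a x hx ih => rw [smul_lie, ih, smul_zero]

/-- disjointness of the zero graded piece from the non-zero ones -/
lemma inf_zero_bot {V : Submodule ℂ L}
    (h : V ≤ ⨆ q, ⨆ _ : q ≠ (0 : I →₀ ℤ), D.grading q) : V ⊓ D.grading 0 = ⊥ := by
  have hd : Disjoint (D.grading 0) (⨆ q, ⨆ _ : q ≠ (0 : I →₀ ℤ), D.grading q) :=
    D.grading_internal.submodule_iSupIndep 0
  exact disjoint_iff.mp ((hd.symm.mono_left h))


/-- iterated brackets of generators against a fixed element -/
inductive IsWord (x0 : L) : L → Prop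
  | base : IsWord x0 x0
  | step (g : L) (hg : g ∈ D.genSet) {x : L} : IsWord x0 x → IsWord x0 ⁅g, x⁆

/-- helper for span closure computations -/
lemma lie_into {s : Set L} {g : L} {W : Submodule ℂ L} (h : ∀ y ∈ s, ⁅g, y⁆ ∈ W) :
    ∀ v ∈ Submodule.span ℂ s, ⁅g, v⁆ ∈ W := by
  intro v hv
  induction hv using Submodule.span_induction with
  | mem y hy => exact h y hy
  | zero => rw [lie_zero]; exact W.zero_mem
  | add x y hx hy ihx ihy => rw [lie_add]; exact W.add_mem ihx ihy
  | smul a x hx ih => rw [lie_smul]; exact W.smul_mem a ih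

/-- degenerate case: if `e j` vanishes in `L` then so does `f j` -/
lemma f_eq_zero (j : I) (he : D.e j = 0) : D.f j = 0 := by
  classical
  have hword : ∀ y, D.IsWord (D.f j) y → ∃ q : I →₀ ℤ, y ∈ D.grading q ∧ q j < 0 := by
    intro y hy
    induction hy with
    | base =>
      refine ⟨-Finsupp.single j 1, D.f_mem j, ?_⟩
      simp
    | step g hg hx ih =>
      obtain ⟨q, hq, hqj⟩ := ih
      simp only [genSet, Set.mem_union, Set.mem_range] at hg
      rcases hg with (⟨i, rfl⟩ | ⟨i, rfl⟩) | ⟨i, rfl⟩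
      · by_cases hij : i = j
        · subst hij
          refine ⟨q, ?_, hqj⟩
          rw [he, zero_lie]; exact (D.grading q).zero_mem
        · refine ⟨Finsupp.single i 1 + q,
            D.grading_bracket _ _ _ (D.e_mem i) _ hq, ?_⟩
          simpa [Finsupp.single_apply, hij] using hqj
      · refine ⟨-Finsupp.single i 1 + q,
          D.grading_bracket _ _ _ (D.f_mem i) _ hq, ?_⟩
        by_cases hij : i = j
        · subst hij; simp only [Finsupp.add_apply, Finsupp.coe_neg, Pi.neg_apply,
            Finsupp.single_eq_same]
          omega
        · simpa [Finsupp.single_apply, hij] using hqj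
      · refine ⟨0 + q, D.grading_bracket _ _ _ (D.coroot_mem0 i) _ hq, ?_⟩
        simpa using hqj
  set K : Submodule ℂ L := Submodule.span ℂ {y : L | D.IsWord (D.f j) y} with hK
  have hcl : ∀ g ∈ D.genSet, ∀ v ∈ K, ⁅g, v⁆ ∈ K := by
    intro g hg v hv
    exact lie_into (fun y hy => Submodule.subset_span (IsWord.step g hg hy)) v hv
  have hideal := D.lie_glob K hcl
  let KI : LieIdeal ℂ L := ⟨K, fun {x m} hm => hideal x m hm⟩
  have hKsub : KI.toSubmodule = K := rfl
  have hgraded : KI.toSubmodule = ⨆ q : I →₀ ℤ, KI.toSubmodule ⊓ D.grading q := by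
    refine le_antisymm ?_ (iSup_le fun q => inf_le_left)
    rw [hKsub]
    refine Submodule.span_le.2 ?_
    intro y hy
    obtain ⟨q, hq, _⟩ := hword y hy
    exact Submodule.mem_iSup_of_mem q ⟨Submodule.subset_span hy, hq⟩
  have hne : K ≤ ⨆ q, ⨆ _ : q ≠ (0 : I →₀ ℤ), D.grading q := by
    refine Submodule.span_le.2 ?_
    intro y hy
    obtain ⟨q, hq, hqj⟩ := hword y hy
    have hq0 : q ≠ 0 := by
      intro h0; rw [h0] at hqj; simp at hqj
    exact Submodule.mem_iSup_of_mem q (Submodule.mem_iSup_of_mem hq0 hq)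
  have hbot : KI = ⊥ := D.graded_simple KI hgraded (D.inf_zero_bot hne)
  have hfj : D.f j ∈ KI := Submodule.subset_span IsWord.base
  rw [hbot] at hfj
  exact (LieSubmodule.mem_bot _).1 hfj

/-- a central homogeneous element of non-zero degree vanishes -/
lemma central_homog_eq_zero {z : L} {q : I →₀ ℤ} (hq : q ≠ 0) (hz : z ∈ D.grading q)
    (hc : ∀ x : L, ⁅x, z⁆ = 0) : z = 0 := by
  let KI : LieIdeal ℂ L := ⟨Submodule.span ℂ {z}, fun {x m} hm => by
    obtain ⟨c, rfl⟩ := Submodule.mem_span_singleton.1 hm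
    rw [lie_smul, hc x, smul_zero]
    exact Submodule.zero_mem _⟩
  have hgraded : KI.toSubmodule = ⨆ q' : I →₀ ℤ, KI.toSubmodule ⊓ D.grading q' := by
    refine le_antisymm ?_ (iSup_le fun q' => inf_le_left)
    show Submodule.span ℂ {z} ≤ _
    rw [Submodule.span_le, Set.singleton_subset_iff]
    exact Submodule.mem_iSup_of_mem q ⟨Submodule.subset_span rfl, hz⟩
  have hne : KI.toSubmodule ≤ ⨆ q', ⨆ _ : q' ≠ (0 : I →₀ ℤ), D.grading q' := by
    show Submodule.span ℂ {z} ≤ _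
    rw [Submodule.span_le, Set.singleton_subset_iff]
    exact Submodule.mem_iSup_of_mem q (Submodule.mem_iSup_of_mem hq hz)
  have hbot : KI = ⊥ := D.graded_simple KI hgraded (D.inf_zero_bot hne)
  have hzz : z ∈ KI := Submodule.subset_span rfl
  rw [hbot] at hzz
  exact (LieSubmodule.mem_bot _).1 hzz


/-- a choice of decomposition coming from internality of the grading -/
noncomputable def dec : DirectSum.Decomposition D.grading :=
  D.grading_internal.chooseDecomposition

/-- projection onto the degree `q` component -/
noncomputable def proj (q : I →₀ ℤ) (x : L) : L :=
  letI := D.dec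
  (DirectSum.decompose D.grading x q : L)

lemma proj_mem (q : I →₀ ℤ) (x : L) : D.proj q x ∈ D.grading q := by
  letI := D.dec
  exact (DirectSum.decompose D.grading x q).2

lemma proj_add (q : I →₀ ℤ) (x y : L) : D.proj q (x + y) = D.proj q x + D.proj q y := by
  letI := D.dec
  show ((DirectSum.decompose D.grading (x + y)) q : L) = _
  rw [DirectSum.decompose_add]
  rfl

lemma proj_smul (q : I →₀ ℤ) (c : ℂ) (x : L) : D.proj q (c • x) = c • D.proj q x := by
  letI := D.dec
  show ((DirectSum.decompose D.grading (c • x)) q : L) = _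
  rw [DirectSum.decompose_smul]
  rfl

lemma proj_zero (q : I →₀ ℤ) : D.proj q 0 = 0 := by
  letI := D.dec
  show ((DirectSum.decompose D.grading (0 : L)) q : L) = _
  rw [DirectSum.decompose_zero]
  rfl

lemma proj_of_mem_same {q : I →₀ ℤ} {x : L} (hx : x ∈ D.grading q) : D.proj q x = x := by
  letI := D.dec
  exact DirectSum.decompose_of_mem_same D.grading hx

lemma proj_of_mem_ne {q q' : I →₀ ℤ} {x : L} (hx : x ∈ D.grading q) (h : q ≠ q') :
    D.proj q' x = 0 := by
  letI := D.dec
  exact DirectSum.decompose_of_mem_ne D.grading hx h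

/-- the bracket with a homogeneous element acts on components by a degree shift -/
lemma lie_proj {g : L} {p : I →₀ ℤ} (hg : g ∈ D.grading p) (z : L) (q : I →₀ ℤ) :
    ⁅g, D.proj q z⁆ = D.proj (p + q) ⁅g, z⁆ := by
  have hz : z ∈ ⨆ r : I →₀ ℤ, D.grading r := by
    rw [D.grading_internal.submodule_iSup_eq_top]; exact Submodule.mem_top
  induction hz using Submodule.iSup_induction' with
  | mem r y hy =>
    by_cases hqr : q = r
    · subst hqr
      rw [D.proj_of_mem_same hy, D.proj_of_mem_same (D.grading_bracket _ _ _ hg _ hy)]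
    · rw [D.proj_of_mem_ne hy fun h => hqr h.symm, lie_zero,
        D.proj_of_mem_ne (D.grading_bracket _ _ _ hg _ hy)
          (fun h => hqr (add_left_cancel h).symm)]
  | zero => rw [D.proj_zero, lie_zero, D.proj_zero]
  | add x y hx hy ihx ihy => rw [D.proj_add, lie_add, ihx, ihy, lie_add, D.proj_add]

/-- components of central elements are central -/
lemma proj_central {z : L} (hz : ∀ x : L, ⁅x, z⁆ = 0) (q : I →₀ ℤ) :
    ∀ x : L, ⁅x, D.proj q z⁆ = 0 := by
  apply D.forall_lie_eq_zero
  intro g hg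
  simp only [genSet, Set.mem_union, Set.mem_range] at hg
  rcases hg with (⟨i, rfl⟩ | ⟨i, rfl⟩) | ⟨i, rfl⟩
  · rw [D.lie_proj (D.e_mem i) z q, hz, D.proj_zero]
  · rw [D.lie_proj (D.f_mem i) z q, hz, D.proj_zero]
  · rw [D.lie_proj (D.coroot_mem0 i) z q, hz, D.proj_zero]

/-- central elements have degree zero -/
lemma central_mem_zero {z : L} (hz : ∀ x : L, ⁅x, z⁆ = 0) : z ∈ D.grading 0 := by
  classical
  letI := D.dec
  have hdecomp := DirectSum.sum_support_decompose D.grading z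
  rw [← hdecomp]
  apply Submodule.sum_mem
  intro q _
  by_cases h0 : q = 0
  · subst h0; exact (DirectSum.decompose D.grading z 0).2
  · have hpq : (DirectSum.decompose D.grading z q : L) = D.proj q z := rfl
    rw [hpq, D.central_homog_eq_zero h0 (D.proj_mem q z) (D.proj_central hz q)]
    exact Submodule.zero_mem _


/-- iterated `e`-brackets, with their degrees -/
inductive IsEW : L → (I →₀ ℤ) → Prop
  | base (i : I) : IsEW (D.e i) (Finsupp.single i 1)
  | step (i : I) {x : L} {q : I →₀ ℤ} : IsEW x q → IsEW ⁅D.e i, x⁆ (Finsupp.single i 1 + q)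

/-- iterated `f`-brackets, with their degrees -/
inductive IsFW : L → (I →₀ ℤ) → Prop
  | base (i : I) : IsFW (D.f i) (Finsupp.single i (-1))
  | step (i : I) {x : L} {q : I →₀ ℤ} : IsFW x q → IsFW ⁅D.f i, x⁆ (Finsupp.single i (-1) + q)

lemma f_mem' (i : I) : D.f i ∈ D.grading (Finsupp.single i (-1)) := by
  rw [Finsupp.single_neg]; exact D.f_mem i

/-- total height of a degree -/
def ht {I : Type*} (q : I →₀ ℤ) : ℤ := q.sum fun _ n => n

lemma ht_single {I : Type*} (i : I) (c : ℤ) : ht (Finsupp.single i c) = c :=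
  Finsupp.sum_single_index rfl

lemma ht_add {I : Type*} (q q' : I →₀ ℤ) : ht (q + q') = ht q + ht q' :=
  Finsupp.sum_add_index' (fun _ => rfl) (fun _ _ _ => rfl)

lemma ew_mem {x : L} {q : I →₀ ℤ} (h : D.IsEW x q) : x ∈ D.grading q := by
  induction h with
  | base i => exact D.e_mem i
  | step i hx ih => exact D.grading_bracket _ _ _ (D.e_mem i) _ ih

lemma fw_mem {x : L} {q : I →₀ ℤ} (h : D.IsFW x q) : x ∈ D.grading q := by
  induction h with
  | base i => exact D.f_mem' i
  | step i hx ih => exact D.grading_bracket _ _ _ (D.f_mem' i) _ ih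

lemma ew_ht {x : L} {q : I →₀ ℤ} (h : D.IsEW x q) : 1 ≤ ht q := by
  induction h with
  | base i => rw [ht_single]
  | step i hx ih => rw [ht_add, ht_single]; omega

lemma fw_ht {x : L} {q : I →₀ ℤ} (h : D.IsFW x q) : ht q ≤ -1 := by
  induction h with
  | base i => rw [ht_single]
  | step i hx ih => rw [ht_add, ht_single]; omega

lemma ew_single {x : L} {q : I →₀ ℤ} (h : D.IsEW x q) (i : I)
    (hq : q = Finsupp.single i 1) : x = D.e i := by
  induction h with
  | base j =>
    obtain rfl : j = i := by
      have := (Finsupp.single_left_inj (one_ne_zero (α := ℤ))).1 hq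
      exact this
    rfl
  | step j hx ih =>
    exfalso
    have h1 := congrArg ht hq
    rw [ht_add, ht_single, ht_single] at h1
    have := D.ew_ht hx
    omega

lemma fw_single {x : L} {q : I →₀ ℤ} (h : D.IsFW x q) (i : I)
    (hq : q = Finsupp.single i (-1)) : x = D.f i := by
  induction h with
  | base j =>
    obtain rfl : j = i := by
      have := (Finsupp.single_left_inj (neg_ne_zero.2 (one_ne_zero (α := ℤ)))).1 hq
      exact this
    rfl
  | step j hx ih =>
    exfalso
    have h1 := congrArg ht hq
    rw [ht_add, ht_single, ht_single] at h1
    have := D.fw_ht hx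
    omega

/-- evaluation of a degree against a coroot row of `A` -/
noncomputable def kapA {I' : Type*} (A' : I' → I' → ℤ) (i : I') (q : I' →₀ ℤ) : ℂ :=
  q.sum fun j n => (n : ℂ) * (A' i j : ℂ)

lemma kapA_single {I' : Type*} (A' : I' → I' → ℤ) (i j : I') (c : ℤ) :
    kapA A' i (Finsupp.single j c) = (c : ℂ) * (A' i j : ℂ) :=
  Finsupp.sum_single_index (by simp)

lemma kapA_add {I' : Type*} (A' : I' → I' → ℤ) (i : I') (q q' : I' →₀ ℤ) :
    kapA A' i (q + q') = kapA A' i q + kapA A' i q' :=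
  Finsupp.sum_add_index' (by simp) (by intros; push_cast; ring)

lemma lie_coroot_ew (i : I) {x : L} {q : I →₀ ℤ} (h : D.IsEW x q) :
    ⁅D.coroot i, x⁆ = kapA A i q • x := by
  induction h with
  | base j =>
    rw [D.rel_he i j, kapA_single,
      show ((1 : ℤ) : ℂ) * (A i j : ℂ) = (A i j : ℂ) by push_cast; ring]
  | step j hx ih =>
    rw [leibniz_lie, D.rel_he, ih, smul_lie, lie_smul, kapA_add, kapA_single, add_smul,
      show ((1 : ℤ) : ℂ) * (A i j : ℂ) = (A i j : ℂ) by push_cast; ring]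

lemma lie_coroot_fw (i : I) {x : L} {q : I →₀ ℤ} (h : D.IsFW x q) :
    ⁅D.coroot i, x⁆ = kapA A i q • x := by
  induction h with
  | base j =>
    rw [D.rel_hf i j, kapA_single,
      show ((-1 : ℤ) : ℂ) * (A i j : ℂ) = -(A i j : ℂ) by push_cast; ring]
  | step j hx ih =>
    rw [leibniz_lie, D.rel_hf, ih, smul_lie, lie_smul, kapA_add, kapA_single, add_smul,
      show ((-1 : ℤ) : ℂ) * (A i j : ℂ) = -(A i j : ℂ) by push_cast; ring]

/-- span of the `e`-words -/
def Epos : Submodule ℂ L := Submodule.span ℂ {x : L | ∃ q, D.IsEW x q}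

/-- span of the `f`-words -/
def Fneg : Submodule ℂ L := Submodule.span ℂ {x : L | ∃ q, D.IsFW x q}

lemma e_mem_Epos (i : I) : D.e i ∈ D.Epos := Submodule.subset_span ⟨_, IsEW.base i⟩
lemma f_mem_Fneg (i : I) : D.f i ∈ D.Fneg := Submodule.subset_span ⟨_, IsFW.base i⟩

lemma lie_e_Epos (i : I) : ∀ v ∈ D.Epos, ⁅D.e i, v⁆ ∈ D.Epos :=
  lie_into fun y hy => by
    obtain ⟨q, hq⟩ := hy
    exact Submodule.subset_span ⟨_, hq.step i⟩

lemma lie_f_Fneg (i : I) : ∀ v ∈ D.Fneg, ⁅D.f i, v⁆ ∈ D.Fneg :=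
  lie_into fun y hy => by
    obtain ⟨q, hq⟩ := hy
    exact Submodule.subset_span ⟨_, hq.step i⟩

lemma lie_h_Epos {h : L} (hh : h ∈ D.grading 0) : ∀ v ∈ D.Epos, ⁅h, v⁆ ∈ D.Epos := by
  rw [D.grading_zero] at hh
  induction hh using Submodule.span_induction with
  | mem x hx =>
    obtain ⟨k, rfl⟩ := hx
    exact lie_into fun y hy => by
      obtain ⟨q, hq⟩ := hy
      rw [D.lie_coroot_ew k hq]
      exact Submodule.smul_mem _ _ (Submodule.subset_span ⟨_, hq⟩)
  | zero => intro v hv; rw [zero_lie]; exact Submodule.zero_mem _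
  | add x y hx hy ihx ihy =>
    intro v hv; rw [add_lie]; exact Submodule.add_mem _ (ihx v hv) (ihy v hv)
  | smul a x hx ih =>
    intro v hv; rw [smul_lie]; exact Submodule.smul_mem _ _ (ih v hv)

lemma lie_h_Fneg {h : L} (hh : h ∈ D.grading 0) : ∀ v ∈ D.Fneg, ⁅h, v⁆ ∈ D.Fneg := by
  rw [D.grading_zero] at hh
  induction hh using Submodule.span_induction with
  | mem x hx =>
    obtain ⟨k, rfl⟩ := hx
    exact lie_into fun y hy => by
      obtain ⟨q, hq⟩ := hy
      rw [D.lie_coroot_fw k hq]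
      exact Submodule.smul_mem _ _ (Submodule.subset_span ⟨_, hq⟩)
  | zero => intro v hv; rw [zero_lie]; exact Submodule.zero_mem _
  | add x y hx hy ihx ihy =>
    intro v hv; rw [add_lie]; exact Submodule.add_mem _ (ihx v hv) (ihy v hv)
  | smul a x hx ih =>
    intro v hv; rw [smul_lie]; exact Submodule.smul_mem _ _ (ih v hv)

lemma lie_f_ew (i : I) {x : L} {q : I →₀ ℤ} (hx : D.IsEW x q) :
    ⁅D.f i, x⁆ ∈ D.grading 0 ⊔ D.Epos := by
  induction hx with
  | base j =>
    by_cases hij : i = j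
    · subst hij
      have h1 : ⁅D.f i, D.e i⁆ = -D.coroot i := by
        rw [← D.rel_ef_eq i, ← lie_skew]
      rw [h1]
      exact Submodule.mem_sup_left (Submodule.neg_mem _ (D.coroot_mem0 i))
    · have h1 : ⁅D.f i, D.e j⁆ = 0 := by
        rw [← lie_skew, D.rel_ef_ne j i fun h => hij h.symm, neg_zero]
      rw [h1]
      exact Submodule.zero_mem _
  | step j hx ih =>
    rw [leibniz_lie]
    apply Submodule.add_mem
    · by_cases hij : i = j
      · subst hij
        have h1 : ⁅D.f i, D.e i⁆ = -D.coroot i := by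
          rw [← D.rel_ef_eq i, ← lie_skew]
        rw [h1, neg_lie, D.lie_coroot_ew i hx]
        exact Submodule.mem_sup_right (Submodule.neg_mem _
          (Submodule.smul_mem _ _ (Submodule.subset_span ⟨_, hx⟩)))
      · have h1 : ⁅D.f i, D.e j⁆ = 0 := by
          rw [← lie_skew, D.rel_ef_ne j i fun h => hij h.symm, neg_zero]
        rw [h1, zero_lie]
        exact Submodule.zero_mem _
    · obtain ⟨h', hh', w, hw, heq⟩ := Submodule.mem_sup.1 ih
      rw [← heq, lie_add]
      apply Submodule.add_mem
      · rw [← lie_skew]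
        exact Submodule.mem_sup_right (Submodule.neg_mem _
          (D.lie_h_Epos hh' _ (D.e_mem_Epos j)))
      · exact Submodule.mem_sup_right (D.lie_e_Epos j w hw)

lemma lie_e_fw (i : I) {x : L} {q : I →₀ ℤ} (hx : D.IsFW x q) :
    ⁅D.e i, x⁆ ∈ D.grading 0 ⊔ D.Fneg := by
  induction hx with
  | base j =>
    by_cases hij : i = j
    · subst hij
      rw [D.rel_ef_eq i]
      exact Submodule.mem_sup_left (D.coroot_mem0 i)
    · rw [D.rel_ef_ne i j hij]
      exact Submodule.zero_mem _
  | step j hx ih =>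
    rw [leibniz_lie]
    apply Submodule.add_mem
    · by_cases hij : i = j
      · subst hij
        rw [D.rel_ef_eq i, D.lie_coroot_fw i hx]
        exact Submodule.mem_sup_right
          (Submodule.smul_mem _ _ (Submodule.subset_span ⟨_, hx⟩))
      · rw [D.rel_ef_ne i j hij, zero_lie]
        exact Submodule.zero_mem _
    · obtain ⟨h', hh', w, hw, heq⟩ := Submodule.mem_sup.1 ih
      rw [← heq, lie_add]
      apply Submodule.add_mem
      · rw [← lie_skew]
        exact Submodule.mem_sup_right (Submodule.neg_mem _
          (D.lie_h_Fneg hh' _ (D.f_mem_Fneg j)))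
      · exact Submodule.mem_sup_right (D.lie_f_Fneg j w hw)

/-- triangular-type decomposition: `L` is spanned by `e`-words, coroots and `f`-words -/
lemma top_decomp : D.Epos ⊔ D.grading 0 ⊔ D.Fneg = ⊤ := by
  set V : Submodule ℂ L := D.Epos ⊔ D.grading 0 ⊔ D.Fneg with hV
  have hE : D.Epos ≤ V := le_trans le_sup_left le_sup_left
  have hH : D.grading 0 ≤ V := le_trans le_sup_right le_sup_left
  have hF : D.Fneg ≤ V := le_sup_right
  have hEH : D.grading 0 ⊔ D.Epos ≤ V := sup_le hH hE
  have hHF : D.grading 0 ⊔ D.Fneg ≤ V := sup_le hH hF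
  have hcl : ∀ g ∈ D.genSet, ∀ v ∈ V, ⁅g, v⁆ ∈ V := by
    intro g hg v hv
    obtain ⟨ab, hab, c, hc, heq⟩ := Submodule.mem_sup.1 hv
    obtain ⟨a, ha, b, hb, heq2⟩ := Submodule.mem_sup.1 hab
    rw [← heq, ← heq2, lie_add, lie_add]
    simp only [genSet, Set.mem_union, Set.mem_range] at hg
    rcases hg with (⟨i, rfl⟩ | ⟨i, rfl⟩) | ⟨i, rfl⟩
    · refine Submodule.add_mem _ (Submodule.add_mem _ ?_ ?_) ?_
      · exact hE (D.lie_e_Epos i a ha)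
      · rw [← lie_skew]
        exact hE (Submodule.neg_mem _ (D.lie_h_Epos hb _ (D.e_mem_Epos i)))
      · exact hHF (lie_into (fun y hy => by
          obtain ⟨q, hq⟩ := hy; exact D.lie_e_fw i hq) c hc)
    · refine Submodule.add_mem _ (Submodule.add_mem _ ?_ ?_) ?_
      · exact hEH (lie_into (fun y hy => by
          obtain ⟨q, hq⟩ := hy; exact D.lie_f_ew i hq) a ha)
      · rw [← lie_skew]
        exact hF (Submodule.neg_mem _ (D.lie_h_Fneg hb _ (D.f_mem_Fneg i)))
      · exact hF (D.lie_f_Fneg i c hc)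
    · refine Submodule.add_mem _ (Submodule.add_mem _ ?_ ?_) ?_
      · exact hE (D.lie_h_Epos (D.coroot_mem0 i) a ha)
      · rw [D.lie_eq_zero_of_mem0 (D.coroot_mem0 i) hb]
        exact V.zero_mem
      · exact hF (D.lie_h_Fneg (D.coroot_mem0 i) c hc)
  have hglob := D.lie_glob V hcl
  let T : LieSubalgebra ℂ L := { V with lie_mem' := fun {x y} _ hy => hglob x y hy }
  have hgen : D.genSet ⊆ T := by
    intro g hg
    simp only [genSet, Set.mem_union, Set.mem_range] at hg
    rcases hg with (⟨i, rfl⟩ | ⟨i, rfl⟩) | ⟨i, rfl⟩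
    · exact hE (D.e_mem_Epos i)
    · exact hF (D.f_mem_Fneg i)
    · exact hH (D.coroot_mem0 i)
  have hT : LieSubalgebra.lieSpan ℂ L D.genSet ≤ T := LieSubalgebra.lieSpan_le.2 hgen
  have h2 : (⊤ : LieSubalgebra ℂ L) ≤ T := by rw [← D.generates]; exact hT
  exact Submodule.eq_top_iff'.2 fun x => h2 (LieSubalgebra.mem_top x)

lemma proj_Epos_ne {p : I →₀ ℤ} (hp : ht p < 1) : ∀ a ∈ D.Epos, D.proj p a = 0 := by
  intro a ha
  induction ha using Submodule.span_induction with
  | mem y hy =>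
    obtain ⟨q, hq⟩ := hy
    refine D.proj_of_mem_ne (D.ew_mem hq) fun h => ?_
    have := D.ew_ht hq
    rw [h] at this
    omega
  | zero => exact D.proj_zero _
  | add x y hx hy ihx ihy => rw [D.proj_add, ihx, ihy, add_zero]
  | smul t x hx ih => rw [D.proj_smul, ih, smul_zero]

lemma proj_Fneg_ne {p : I →₀ ℤ} (hp : -1 < ht p) : ∀ a ∈ D.Fneg, D.proj p a = 0 := by
  intro a ha
  induction ha using Submodule.span_induction with
  | mem y hy =>
    obtain ⟨q, hq⟩ := hy
    refine D.proj_of_mem_ne (D.fw_mem hq) fun h => ?_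
    have := D.fw_ht hq
    rw [h] at this
    omega
  | zero => exact D.proj_zero _
  | add x y hx hy ihx ihy => rw [D.proj_add, ihx, ihy, add_zero]
  | smul t x hx ih => rw [D.proj_smul, ih, smul_zero]

lemma proj_Epos_single (i : I) :
    ∀ a ∈ D.Epos, D.proj (Finsupp.single i 1) a ∈ Submodule.span ℂ {D.e i} := by
  intro a ha
  induction ha using Submodule.span_induction with
  | mem y hy =>
    obtain ⟨q, hq⟩ := hy
    by_cases hqi : q = Finsupp.single i 1
    · subst hqi
      rw [D.proj_of_mem_same (D.ew_mem hq), D.ew_single hq i rfl]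
      exact Submodule.subset_span rfl
    · rw [D.proj_of_mem_ne (D.ew_mem hq) hqi]
      exact Submodule.zero_mem _
  | zero => rw [D.proj_zero]; exact Submodule.zero_mem _
  | add x y hx hy ihx ihy => rw [D.proj_add]; exact Submodule.add_mem _ ihx ihy
  | smul t x hx ih => rw [D.proj_smul]; exact Submodule.smul_mem _ _ ih

lemma proj_Fneg_single (i : I) :
    ∀ a ∈ D.Fneg, D.proj (Finsupp.single i (-1)) a ∈ Submodule.span ℂ {D.f i} := by
  intro a ha
  induction ha using Submodule.span_induction with
  | mem y hy =>
    obtain ⟨q, hq⟩ := hy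
    by_cases hqi : q = Finsupp.single i (-1)
    · subst hqi
      rw [D.proj_of_mem_same (D.fw_mem hq), D.fw_single hq i rfl]
      exact Submodule.subset_span rfl
    · rw [D.proj_of_mem_ne (D.fw_mem hq) hqi]
      exact Submodule.zero_mem _
  | zero => rw [D.proj_zero]; exact Submodule.zero_mem _
  | add x y hx hy ihx ihy => rw [D.proj_add]; exact Submodule.add_mem _ ihx ihy
  | smul t x hx ih => rw [D.proj_smul]; exact Submodule.smul_mem _ _ ih

/-- the degree `α_i` piece is spanned by `e i` -/
lemma mem_grading_single (i : I) {v : L} (hv : v ∈ D.grading (Finsupp.single i 1)) :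
    ∃ c : ℂ, v = c • D.e i := by
  have hne0 : (0 : I →₀ ℤ) ≠ Finsupp.single i 1 := fun h => by
    have := congrArg ht h
    rw [ht_single] at this
    simp [ht] at this
  have htop : v ∈ D.Epos ⊔ D.grading 0 ⊔ D.Fneg := by
    rw [D.top_decomp]; exact Submodule.mem_top
  obtain ⟨ab, hab, c, hc, heq⟩ := Submodule.mem_sup.1 htop
  obtain ⟨a, ha, b, hb, heq2⟩ := Submodule.mem_sup.1 hab
  have hv' : D.proj (Finsupp.single i 1) v = v := D.proj_of_mem_same hv
  have hpb : D.proj (Finsupp.single i 1) b = 0 := D.proj_of_mem_ne hb hne0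
  have hpc : D.proj (Finsupp.single i 1) c = 0 := by
    refine D.proj_Fneg_ne ?_ c hc
    rw [ht_single]; omega
  have hpa := D.proj_Epos_single i a ha
  have hfinal : v ∈ Submodule.span ℂ {D.e i} := by
    rw [← hv', ← heq, ← heq2, D.proj_add, D.proj_add, hpb, hpc, add_zero, add_zero]
    exact hpa
  obtain ⟨d, hd⟩ := Submodule.mem_span_singleton.1 hfinal
  exact ⟨d, hd.symm⟩

/-- the degree `-α_i` piece is spanned by `f i` -/
lemma mem_grading_single_neg (i : I) {v : L} (hv : v ∈ D.grading (-Finsupp.single i 1)) :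
    ∃ c : ℂ, v = c • D.f i := by
  rw [show -Finsupp.single i 1 = Finsupp.single i (-1) from (Finsupp.single_neg i 1).symm] at hv
  have hne0 : (0 : I →₀ ℤ) ≠ Finsupp.single i (-1) := fun h => by
    have := congrArg ht h
    rw [ht_single] at this
    simp [ht] at this
  have htop : v ∈ D.Epos ⊔ D.grading 0 ⊔ D.Fneg := by
    rw [D.top_decomp]; exact Submodule.mem_top
  obtain ⟨ab, hab, c, hc, heq⟩ := Submodule.mem_sup.1 htop
  obtain ⟨a, ha, b, hb, heq2⟩ := Submodule.mem_sup.1 hab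
  have hv' : D.proj (Finsupp.single i (-1)) v = v := D.proj_of_mem_same hv
  have hpb : D.proj (Finsupp.single i (-1)) b = 0 := D.proj_of_mem_ne hb hne0
  have hpa : D.proj (Finsupp.single i (-1)) a = 0 := by
    refine D.proj_Epos_ne ?_ a ha
    rw [ht_single]; omega
  have hpc := D.proj_Fneg_single i c hc
  have hfinal : v ∈ Submodule.span ℂ {D.f i} := by
    rw [← hv', ← heq, ← heq2, D.proj_add, D.proj_add, hpa, hpb, add_zero, zero_add]
    exact hpc
  obtain ⟨d, hd⟩ := Submodule.mem_span_singleton.1 hfinal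
  exact ⟨d, hd.symm⟩


/-- sufficiency: a degree-zero element killing all the `e i` is central -/
lemma central_of {z : L} (hz0 : z ∈ D.grading 0) (hze : ∀ i, ⁅z, D.e i⁆ = 0) :
    ∀ x : L, ⁅x, z⁆ = 0 := by
  have hzf : ∀ j, ⁅z, D.f j⁆ = 0 := by
    intro j
    obtain ⟨c, hce, hcf⟩ := D.exists_scalar hz0 j
    have hc0 : c • D.e j = 0 := hce.symm.trans (hze j)
    rcases smul_eq_zero.1 hc0 with hc | he
    · rw [hcf, hc, zero_smul, neg_zero]
    · rw [hcf, D.f_eq_zero j he, smul_zero, neg_zero]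
  apply D.forall_lie_eq_zero
  intro g hg
  simp only [genSet, Set.mem_union, Set.mem_range] at hg
  rcases hg with (⟨i, rfl⟩ | ⟨i, rfl⟩) | ⟨i, rfl⟩
  · rw [← lie_skew, hze, neg_zero]
  · rw [← lie_skew, hzf, neg_zero]
  · exact D.lie_eq_zero_of_mem0 (D.coroot_mem0 i) hz0

/-- an ideal containing some `e i` is everything (`A` indecomposable) -/
lemma ideal_eq_top (hA : IsGCM A) (hind : IsIndecomposable A) (J : LieIdeal ℂ L)
    {i : I} (hei : D.e i ∈ J) : J = ⊤ := by
  set s : Set I := {k | D.e k ∈ J} with hs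
  have hneg : ∀ x : L, x ∈ J → -x ∈ J := fun x hx => by
    have := J.smul_mem (-1 : ℂ) hx
    rwa [neg_one_smul] at this
  have hcor : ∀ k ∈ s, D.coroot k ∈ J := by
    intro k hk
    have h1 : ⁅D.f k, D.e k⁆ ∈ J := J.lie_mem hk
    have h2 : -⁅D.f k, D.e k⁆ = D.coroot k := by rw [lie_skew, D.rel_ef_eq]
    exact h2 ▸ hneg _ h1
  have hf : ∀ k ∈ s, D.f k ∈ J := by
    intro k hk
    have h1 : ⁅D.f k, D.coroot k⁆ ∈ J := J.lie_mem (hcor k hk)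
    have h2 : ⁅D.f k, D.coroot k⁆ = ((A k k : ℤ) : ℂ) • D.f k := by
      rw [← lie_skew, D.rel_hf, neg_smul, neg_neg]
    have h3 : ((A k k : ℤ) : ℂ) = 2 := by rw [hA.diag]; norm_num
    rw [h2, h3] at h1
    have h4 := J.smul_mem ((2 : ℂ)⁻¹) h1
    rwa [smul_smul, inv_mul_cancel₀ (two_ne_zero), one_smul] at h4
  have hstep : ∀ k ∈ s, ∀ m, A k m ≠ 0 → m ∈ s := by
    intro k hk m hkm
    have h1 : ⁅D.e m, D.coroot k⁆ ∈ J := J.lie_mem (hcor k hk)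
    have h2 : -⁅D.e m, D.coroot k⁆ = (A k m : ℂ) • D.e m := by
      rw [lie_skew, D.rel_he]
    have h3 : (A k m : ℂ) • D.e m ∈ J := h2 ▸ hneg _ h1
    have hc : (A k m : ℂ) ≠ 0 := Int.cast_ne_zero.2 hkm
    have h4 := J.smul_mem ((A k m : ℂ)⁻¹) h3
    rw [smul_smul, inv_mul_cancel₀ hc, one_smul] at h4
    exact h4
  have huniv : ∀ k, k ∈ s := by
    intro k
    by_contra hk
    have hcne : sᶜ.Nonempty := ⟨k, hk⟩
    obtain ⟨k', hk', m, hm, hkm⟩ := hind s ⟨i, hei⟩ hcne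
    exact hm (hstep k' hk' m hkm)
  have hgen : D.genSet ⊆ {x : L | x ∈ J} := by
    intro g hg
    simp only [genSet, Set.mem_union, Set.mem_range] at hg
    rcases hg with (⟨k, rfl⟩ | ⟨k, rfl⟩) | ⟨k, rfl⟩
    · exact huniv k
    · exact hf k (huniv k)
    · exact hcor k (huniv k)
  let T : LieSubalgebra ℂ L :=
    { J.toSubmodule with lie_mem' := fun {x y} _ hy => J.lie_mem hy }
  have hT : LieSubalgebra.lieSpan ℂ L D.genSet ≤ T := LieSubalgebra.lieSpan_le.2 hgen
  have h2 : (⊤ : LieSubalgebra ℂ L) ≤ T := by rw [← D.generates]; exact hT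
  exact eq_top_iff.2 fun x _ => h2 (LieSubalgebra.mem_top x)

/-- degree-zero elements of a proper ideal are central -/
lemma stepA (hA : IsGCM A) (hind : IsIndecomposable A) {J : LieIdeal ℂ L} (hJ : J ≠ ⊤)
    {h' : L} (hmem : h' ∈ J) (h0 : h' ∈ D.grading 0) : ∀ x : L, ⁅x, h'⁆ = 0 := by
  have key : ∀ i, ⁅h', D.e i⁆ = 0 := by
    intro i
    obtain ⟨c, hce, _⟩ := D.exists_scalar h0 i
    by_cases hc : c = 0
    · rw [hce, hc, zero_smul]
    · exfalso
      apply hJ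
      have h1 : ⁅D.e i, h'⁆ ∈ J := J.lie_mem hmem
      have h2 := J.smul_mem (-1 : ℂ) h1
      rw [neg_one_smul, lie_skew, hce] at h2
      have h3 := J.smul_mem (c⁻¹ : ℂ) h2
      rw [smul_smul, inv_mul_cancel₀ hc, one_smul] at h3
      exact D.ideal_eq_top hA hind J h3
  exact D.central_of h0 key

/-- elements of a proper ideal of degree `α_i` vanish -/
lemma stepR_e (hA : IsGCM A) (hind : IsIndecomposable A) {J : LieIdeal ℂ L} (hJ : J ≠ ⊤)
    (i : I) {v : L} (hv : v ∈ J) (hq : v ∈ D.grading (Finsupp.single i 1)) : v = 0 := by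
  obtain ⟨c, rfl⟩ := D.mem_grading_single i hq
  have hw : ⁅D.f i, c • D.e i⁆ = -(c • D.coroot i) := by
    rw [lie_smul, ← lie_skew, D.rel_ef_eq, smul_neg]
  have hwJ : -(c • D.coroot i) ∈ J := hw ▸ J.lie_mem hv
  have hw0 : -(c • D.coroot i) ∈ D.grading 0 :=
    Submodule.neg_mem _ (Submodule.smul_mem _ _ (D.coroot_mem0 i))
  have hcent := D.stepA hA hind hJ hwJ hw0
  have h6 := hcent (D.e i)
  have h7 : ⁅D.e i, D.coroot i⁆ = -(((A i i : ℤ) : ℂ) • D.e i) := by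
    rw [← lie_skew, D.rel_he]
  have h8 : ((A i i : ℤ) : ℂ) = 2 := by rw [hA.diag]; norm_num
  rw [lie_neg, lie_smul, h7, h8, smul_neg, neg_neg, smul_smul] at h6
  rcases smul_eq_zero.1 h6 with h9 | h9
  · have hc0 : c = 0 := by
      rcases mul_eq_zero.1 h9 with h | h
      · exact h
      · exact absurd h two_ne_zero
    rw [hc0, zero_smul]
  · rw [h9, smul_zero]

/-- elements of a proper ideal of degree `-α_i` vanish -/
lemma stepR_f (hA : IsGCM A) (hind : IsIndecomposable A) {J : LieIdeal ℂ L} (hJ : J ≠ ⊤)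
    (i : I) {v : L} (hv : v ∈ J) (hq : v ∈ D.grading (-Finsupp.single i 1)) : v = 0 := by
  obtain ⟨c, rfl⟩ := D.mem_grading_single_neg i hq
  have hw : ⁅D.e i, c • D.f i⁆ = c • D.coroot i := by
    rw [lie_smul, D.rel_ef_eq]
  have hwJ : c • D.coroot i ∈ J := hw ▸ J.lie_mem hv
  have hw0 : c • D.coroot i ∈ D.grading 0 := Submodule.smul_mem _ _ (D.coroot_mem0 i)
  have hcent := D.stepA hA hind hJ hwJ hw0
  have h6 := hcent (D.f i)
  have h7 : ⁅D.f i, D.coroot i⁆ = ((A i i : ℤ) : ℂ) • D.f i := by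
    rw [← lie_skew, D.rel_hf, neg_smul, neg_neg]
  have h8 : ((A i i : ℤ) : ℂ) = 2 := by rw [hA.diag]; norm_num
  rw [lie_smul, h7, h8, smul_smul] at h6
  rcases smul_eq_zero.1 h6 with h9 | h9
  · have hc0 : c = 0 := by
      rcases mul_eq_zero.1 h9 with h | h
      · exact h
      · exact absurd h two_ne_zero
    rw [hc0, zero_smul]
  · rw [h9, smul_zero]

end DerivedKMData
end KM

open KM

/-- for a possibly infinite generalized Cartan matrix A:
(1) the centre of 𝔤'(A) is 𝔠'(A) = {h ∈ 𝔥'(A) : α_i(h) = 0 ∀ i} (the condition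
α_i(h) = 0 being expressed as [h, e_i] = 0); (2) if A is indecomposable, every proper
Q-graded ideal of 𝔤'(A) is contained in the centre. -/
theorem statement13 {I : Type*} (A : I → I → ℤ) (hA : IsGCM A)
    (L : Type*) [LieRing L] [LieAlgebra ℂ L] (D : DerivedKMData I A L) :
    ((LieAlgebra.center ℂ L : Set L)
      = {z : L | z ∈ D.grading 0 ∧ ∀ i, ⁅z, D.e i⁆ = 0}) ∧
    (IsIndecomposable A →
      ∀ J : LieIdeal ℂ L, D.IsGradedIdeal J → J ≠ ⊤ → J ≤ LieAlgebra.center ℂ L) := by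
  constructor
  · -- part 1
    ext z
    simp only [SetLike.mem_coe, Set.mem_setOf_eq]
    rw [LieModule.mem_maxTrivSubmodule]
    constructor
    · intro hz
      refine ⟨D.central_mem_zero hz, fun i => ?_⟩
      rw [← lie_skew, hz, neg_zero]
    · rintro ⟨hz0, hze⟩
      exact D.central_of hz0 hze
  · -- part 2
    intro hind J hgr hJ
    set M : Submodule ℂ L :=
      ⨆ q : {q : I →₀ ℤ // q ≠ 0}, J.toSubmodule ⊓ D.grading q.1 with hM
    have hMle : ∀ q : I →₀ ℤ, q ≠ 0 → J.toSubmodule ⊓ D.grading q ≤ M := by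
      intro q hq
      exact le_iSup (fun q : {q : I →₀ ℤ // q ≠ 0} => J.toSubmodule ⊓ D.grading q.1) ⟨q, hq⟩
    have hcl : ∀ g ∈ D.genSet, ∀ v ∈ M, ⁅g, v⁆ ∈ M := by
      intro g hg v hv
      induction hv using Submodule.iSup_induction' with
      | mem r y hy =>
        obtain ⟨hyJ, hyg⟩ := hy
        have hbJ : ⁅g, y⁆ ∈ J := J.lie_mem hyJ
        simp only [KM.DerivedKMData.genSet, Set.mem_union, Set.mem_range] at hg
        rcases hg with (⟨i, rfl⟩ | ⟨i, rfl⟩) | ⟨i, rfl⟩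
        · by_cases hr0 : Finsupp.single i 1 + r.1 = 0
          · have hry : r.1 = -Finsupp.single i 1 := by
              rw [← neg_eq_of_add_eq_zero_right hr0]
            rw [hry] at hyg
            rw [D.stepR_f hA hind hJ i hyJ hyg, lie_zero]
            exact Submodule.zero_mem _
          · exact hMle _ hr0 ⟨hbJ, D.grading_bracket _ _ _ (D.e_mem i) _ hyg⟩
        · by_cases hr0 : -Finsupp.single i 1 + r.1 = 0
          · have hry : r.1 = Finsupp.single i 1 := by
              have := neg_eq_of_add_eq_zero_right hr0
              rw [← this, neg_neg]
            rw [hry] at hyg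
            rw [D.stepR_e hA hind hJ i hyJ hyg, lie_zero]
            exact Submodule.zero_mem _
          · exact hMle _ hr0 ⟨hbJ, D.grading_bracket _ _ _ (D.f_mem i) _ hyg⟩
        · have hr0 : (0 : I →₀ ℤ) + r.1 ≠ 0 := by
            rw [zero_add]; exact r.2
          exact hMle _ hr0 ⟨hbJ, D.grading_bracket _ _ _ (D.coroot_mem0 i) _ hyg⟩
      | zero => rw [lie_zero]; exact Submodule.zero_mem _
      | add x y hx hy ihx ihy => rw [lie_add]; exact Submodule.add_mem _ ihx ihy
    have hglob := D.lie_glob M hcl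
    let MI : LieIdeal ℂ L := ⟨M, fun {x m} hm => hglob x m hm⟩
    have hMgraded : MI.toSubmodule = ⨆ q : I →₀ ℤ, MI.toSubmodule ⊓ D.grading q := by
      refine le_antisymm ?_ (iSup_le fun q => inf_le_left)
      show M ≤ _
      refine iSup_le fun q => ?_
      refine le_trans (le_inf (hMle q.1 q.2) inf_le_right) ?_
      exact le_iSup (fun p : I →₀ ℤ => MI.toSubmodule ⊓ D.grading p) q.1
    have hMne : MI.toSubmodule ≤ ⨆ q, ⨆ _ : q ≠ (0 : I →₀ ℤ), D.grading q := by
      show M ≤ _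
      refine iSup_le fun q => ?_
      exact le_trans inf_le_right
        (le_iSup₂ (f := fun (p : I →₀ ℤ) (_ : p ≠ 0) => D.grading p) q.1 q.2)
    have hMbot : MI = ⊥ := D.graded_simple MI hMgraded (D.inf_zero_bot hMne)
    have hM0 : ∀ q : I →₀ ℤ, q ≠ 0 → J.toSubmodule ⊓ D.grading q = ⊥ := by
      intro q hq
      refine le_antisymm ?_ bot_le
      refine le_trans (hMle q hq) ?_
      have : MI.toSubmodule = (⊥ : LieIdeal ℂ L).toSubmodule := by rw [hMbot]
      rw [LieSubmodule.bot_toSubmodule] at this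
      exact this.le
    have hJ0 : J.toSubmodule ≤ J.toSubmodule ⊓ D.grading 0 := by
      conv_lhs => rw [hgr]
      refine iSup_le fun q => ?_
      by_cases hq : q = 0
      · subst hq; exact le_refl _
      · rw [hM0 q hq]; exact bot_le
    intro x hx
    have hx' : x ∈ J.toSubmodule ⊓ D.grading 0 := hJ0 hx
    rw [LieModule.mem_maxTrivSubmodule]
    exact D.stepA hA hind hJ hx'.1 hx'.2
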